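/- With the notation above, for any n ∈ ℕ, any digits α_1,...,α_{n-1} ∈ {0,1,2}, and any α_n ∈ {1,2}, the value of the series F for the sequence (α_1,...,α_{n-1}, α_n, 0, 0, 0, ...) equals the value of F for the sequence (α_1,...,α_{n-1}, α_n − 1, 2, 2, 2, ...). That is, the defining series yields the same value for the two representations of any Q*_3-rational point. -/

import Mathlib

open Finset

/-- g_{ik}: factors determined by the sequence (ε_k); indices 0-based. -/
noncomputable def gq (ε : ℕ → ℝ) (i : Fin 3) (k : ℕ) : ℝ :=
  if i = 1 then (1 - 2 * ε k) / 3 else (1 + ε k) / 3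

/-- δ_{ik}: δ_{0k}=0, δ_{1k}=g_{0k}, δ_{2k}=g_{0k}+g_{1k}. -/
noncomputable def dq (ε : ℕ → ℝ) (i : Fin 3) (k : ℕ) : ℝ :=
  if i = 0 then 0 else if i = 1 then gq ε 0 k else gq ε 0 k + gq ε 1 k

/-- F((α_k)) = δ_{α_1 1} + Σ_{k≥2} δ_{α_k k} Π_{j=1}^{k-1} g_{α_j j} (0-based indexing). -/
noncomputable def F (ε : ℕ → ℝ) (α : ℕ → Fin 3) : ℝ :=
  ∑' k : ℕ, dq ε (α k) k * ∏ j ∈ Finset.range k, gq ε (α j) j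

open Filter in
lemma telescope_hasSum (c : ℕ → ℝ) (h1 : ∀ k, 1/3 ≤ c k) (h2 : ∀ k, c k ≤ 2/3) :
    HasSum (fun k => (1 - c k) * ∏ i ∈ Finset.range k, c i) 1 := by
  have hp0 : ∀ k, 0 ≤ ∏ i ∈ Finset.range k, c i := fun k =>
    Finset.prod_nonneg fun i _ => le_trans (by norm_num) (h1 i)
  have hnn : ∀ k, 0 ≤ (1 - c k) * ∏ i ∈ Finset.range k, c i := fun k =>
    mul_nonneg (by linarith [h2 k]) (hp0 k)
  rw [hasSum_iff_tendsto_nat_of_nonneg hnn]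
  have hsum : ∀ m, ∑ k ∈ Finset.range m, (1 - c k) * ∏ i ∈ Finset.range k, c i
      = 1 - ∏ i ∈ Finset.range m, c i := by
    intro m
    have : ∀ k, (1 - c k) * ∏ i ∈ Finset.range k, c i
        = (∏ i ∈ Finset.range k, c i) - ∏ i ∈ Finset.range (k+1), c i := by
      intro k; rw [Finset.prod_range_succ]; ring
    simp only [this, Finset.sum_range_sub' (fun k => ∏ i ∈ Finset.range k, c i)]
    simp
  simp only [hsum]
  have : Tendsto (fun m => ∏ i ∈ Finset.range m, c i) atTop (nhds 0) := by
    have hb : ∀ m, ∏ i ∈ Finset.range m, c i ≤ (2/3 : ℝ)^m := by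
      intro m
      calc ∏ i ∈ Finset.range m, c i ≤ ∏ i ∈ Finset.range m, (2/3 : ℝ) :=
        Finset.prod_le_prod (fun i _ => le_trans (by norm_num) (h1 i)) (fun i _ => h2 i)
      _ = (2/3)^m := by rw [Finset.prod_const, Finset.card_range]
    exact squeeze_zero hp0 hb (tendsto_pow_atTop_nhds_zero_of_lt_one (by norm_num) (by norm_num))
  have := this.const_sub 1
  simpa using this

theorem stmt2 (ε : ℕ → ℝ) (hε : ∀ k, 0 ≤ ε k ∧ ε k ≤ 1) (n : ℕ) (α β : ℕ → Fin 3)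
    (hpre : ∀ k < n, β k = α k) (hn : α n ≠ 0) (hβn : (β n : ℕ) = (α n : ℕ) - 1)
    (hαtail : ∀ k > n, α k = 0) (hβtail : ∀ k > n, β k = 2) :
    F ε α = F ε β := by
  set fα : ℕ → ℝ := fun k => dq ε (α k) k * ∏ j ∈ Finset.range k, gq ε (α j) j with hfα
  set fβ : ℕ → ℝ := fun k => dq ε (β k) k * ∏ j ∈ Finset.range k, gq ε (β j) j with hfβ
  set c : ℕ → ℝ := fun k => gq ε 2 (n + 1 + k) with hc
  set Q : ℝ := ∏ j ∈ Finset.range (n + 1), gq ε (β j) j with hQ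
  have hc1 : ∀ k, 1/3 ≤ c k := by
    intro k
    simp only [hc, gq, if_neg (by decide : (2 : Fin 3) ≠ 1)]
    linarith [(hε (n+1+k)).1]
  have hc2 : ∀ k, c k ≤ 2/3 := by
    intro k
    simp only [hc, gq, if_neg (by decide : (2 : Fin 3) ≠ 1)]
    linarith [(hε (n+1+k)).2]
  -- rewrite shifted β-terms
  have hshift : ∀ k, fβ (k + (n + 1)) = Q * ((1 - c k) * ∏ i ∈ Finset.range k, c i) := by
    intro k
    have hβk : β (k + (n + 1)) = 2 := hβtail _ (by omega)
    have hd : dq ε 2 (k + (n+1)) = 1 - gq ε 2 (k + (n+1)) := by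
      simp [dq, gq]; ring
    have hprod : ∏ j ∈ Finset.range (k + (n+1)), gq ε (β j) j
        = Q * ∏ i ∈ Finset.range k, c i := by
      rw [add_comm k (n+1), Finset.prod_range_add]
      congr 1
      apply Finset.prod_congr rfl
      intro i _
      rw [hβtail (n+1+i) (by omega)]
    simp only [hfβ, hβk, hd, hprod, hc]
    have : k + (n+1) = n + 1 + k := by omega
    rw [this]; ring
  have hβHasSum : HasSum (fun k => fβ (k + (n + 1))) Q := by
    have := (telescope_hasSum c hc1 hc2).mul_left Q
    simpa [hshift] using this
  have hβSummable : Summable fβ := by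
    exact (summable_nat_add_iff (n+1)).mp hβHasSum.summable
  have hαzero : ∀ k, fα (k + (n + 1)) = 0 := by
    intro k
    have : α (k + (n+1)) = 0 := hαtail _ (by omega)
    simp [hfα, this, dq]
  have hαSummable : Summable fα := by
    apply (summable_nat_add_iff (n+1)).mp
    simpa [hαzero] using summable_zero
  have hFα : F ε α = ∑ k ∈ Finset.range (n+1), fα k := by
    rw [show F ε α = ∑' k, fα k from rfl, ← hαSummable.sum_add_tsum_nat_add (n+1)]
    simp [hαzero]
  have hFβ : F ε β = ∑ k ∈ Finset.range (n+1), fβ k + Q := by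
    rw [show F ε β = ∑' k, fβ k from rfl, ← hβSummable.sum_add_tsum_nat_add (n+1),
      hβHasSum.tsum_eq]
  rw [hFα, hFβ]
  -- products below n agree
  have hprodeq : ∀ k ≤ n, ∏ j ∈ Finset.range k, gq ε (β j) j = ∏ j ∈ Finset.range k, gq ε (α j) j := by
    intro k hk
    apply Finset.prod_congr rfl
    intro j hj
    rw [hpre j (by simp at hj; omega)]
  rw [Finset.sum_range_succ, Finset.sum_range_succ]
  have hsum_eq : ∑ k ∈ Finset.range n, fα k = ∑ k ∈ Finset.range n, fβ k := by
    apply Finset.sum_congr rfl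
    intro k hk
    simp only [hfα, hfβ]
    rw [hpre k (by simpa using hk), hprodeq k (le_of_lt (by simpa using hk))]
  rw [hsum_eq]
  have hQ' : Q = gq ε (β n) n * ∏ j ∈ Finset.range n, gq ε (β j) j := by
    rw [hQ, Finset.prod_range_succ]; ring
  -- key digit identity
  have hdig : dq ε (α n) n = dq ε (β n) n + gq ε (β n) n := by
    have h3 : (α n : ℕ) < 3 := (α n).isLt
    have hne : (α n : ℕ) ≠ 0 := fun h => hn (Fin.ext h)
    have hv : (α n : ℕ) = 1 ∨ (α n : ℕ) = 2 := by omega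
    rcases hv with h | h
    · have hα1 : α n = 1 := by rw [Fin.ext_iff]; simp [h]
      have hβ0 : β n = 0 := by rw [Fin.ext_iff]; simp [hβn, h]
      simp [hα1, hβ0, dq]
    · have hα2 : α n = 2 := by rw [Fin.ext_iff]; simp [h]
      have hβ1 : β n = 1 := by rw [Fin.ext_iff]; simp [hβn, h]
      simp [hα2, hβ1, dq]
  simp only [hfα, hfβ]
  rw [hprodeq n le_rfl, hQ', hprodeq n le_rfl, hdig]
  ring
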